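/- Let a, b, c, d be nonnegative integers with ad − bc = 1 and β a nonnegative integer. Then max{a,b}² + βab − min{a,b}² divides ψ_β(max{ac, bd} + βbc − min{ac, bd}), where ψ_β(n) = n² + βn − 1. -/
import Mathlib


theorem psi_beta_well_defined (a b c d β : ℕ) (hdet : a*d = b*c + 1) :
    ((max a b : ℤ)^2 + (β:ℤ)*a*b - (min a b : ℤ)^2) ∣
      (((max (a*c) (b*d) : ℤ) + (β:ℤ)*b*c - (min (a*c) (b*d) : ℤ))^2
        + (β:ℤ) * ((max (a*c) (b*d) : ℤ) + (β:ℤ)*b*c - (min (a*c) (b*d) : ℤ)) - 1) := by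
  have hd : (a:ℤ)*d = (b:ℤ)*c + 1 := by exact_mod_cast hdet
  have ha0 : (0:ℤ) ≤ a := Int.natCast_nonneg a
  have hb0 : (0:ℤ) ≤ b := Int.natCast_nonneg b
  have hc0 : (0:ℤ) ≤ c := Int.natCast_nonneg c
  have hd0 : (0:ℤ) ≤ d := Int.natCast_nonneg d
  rcases le_or_gt a b with h | h
  · have h' : (a:ℤ) ≤ b := by exact_mod_cast h
    have hb : (1:ℤ) ≤ b := by nlinarith
    have hc : (a:ℤ)*c ≤ (b:ℤ)*d := by nlinarith [mul_le_mul_of_nonneg_right (mul_le_mul h' h' ha0 hb0) hd0]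
    rw [max_eq_right h', min_eq_left h', max_eq_right hc, min_eq_left hc]
    refine ⟨(d:ℤ)^2 - (c:ℤ)^2 + (β:ℤ)*c*d, ?_⟩
    linear_combination ((1:ℤ) + (-1)*(b:ℤ)*(d:ℤ)*(β:ℤ) + (-1)*(b:ℤ)*(c:ℤ)
      + (-1)*(b:ℤ)*(c:ℤ)*(β:ℤ)^2 + (a:ℤ)*(d:ℤ) + (a:ℤ)*(c:ℤ)*(β:ℤ)) * hd
  · have h' : (b:ℤ) < a := by exact_mod_cast h
    have hc : (b:ℤ)*d ≤ (a:ℤ)*c := by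
      rcases Nat.eq_zero_or_pos c with rfl | hcp
      · have h1 : a * d = 1 := by simpa using hdet
        have ha1 : a ≤ 1 := Nat.le_of_dvd one_pos ⟨d, h1.symm⟩
        have hb1 : b = 0 := by omega
        simp [hb1]
      · have hcp' : (1:ℤ) ≤ c := by exact_mod_cast hcp
        nlinarith [mul_le_mul_of_nonneg_right (mul_le_mul h'.le h'.le hb0 ha0) hc0]
    rw [max_eq_left h'.le, min_eq_right h'.le, max_eq_left hc, min_eq_right hc]
    refine ⟨(c:ℤ)^2 - (d:ℤ)^2 + (β:ℤ)*c*d, ?_⟩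
    linear_combination ((1:ℤ) + (b:ℤ)*(d:ℤ)*(β:ℤ) + (-1)*(b:ℤ)*(c:ℤ)
      + (-1)*(b:ℤ)*(c:ℤ)*(β:ℤ)^2 + (a:ℤ)*(d:ℤ) + (-1)*(a:ℤ)*(c:ℤ)*(β:ℤ)) * hd
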